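/- arXiv:1801.00684 — 2 statements merged into one kernel-verified Lean document; each statement's English description precedes it below -/
import Mathlib

section
/- For an equiprobable discrete distribution with sorted outcomes ψ^{i_1} ≤ … ≤ ψ^{i_{n_d}} each of probability p = 1/n_d, CVaR_α(ψ) = -(1/α)(Σ_{k=1}^{j} p ψ^{i_k} + (α - jp) ψ^{i_{j+1}}) for α ∈ [jp, (j+1)p) with 1 ≤ j ≤ n_d - 1, CVaR_α(ψ) = -ψ^{i_1} for α ∈ (0, p), and CVaR_1(ψ) = -Σ_k p ψ^{i_k}. -/
open Finset MeasureTheory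

/-- The value-at-risk `VaR_s(ψ)` of an equiprobable discrete distribution with
sorted outcomes `ψ 0 ≤ … ≤ ψ (n-1)`: `VaR_s(ψ) = -ψ j` for
`s ∈ [j/n, (j+1)/n)` and `VaR_1(ψ) = -ψ (n-1)`. -/
noncomputable def VaRd (n : ℕ) [NeZero n] (ψ : Fin n → ℝ) (s : ℝ) : ℝ :=
  -ψ ⟨min ⌊s * (n : ℝ)⌋₊ (n - 1),
      lt_of_le_of_lt (min_le_right _ _)
        (Nat.sub_lt (Nat.pos_of_ne_zero (NeZero.ne n)) one_pos)⟩

/-- The conditional value-at-risk `CVaR_α(ψ) = (1/α) ∫₀^α VaR_s(ψ) ds` of an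
equiprobable discrete distribution with sorted outcomes. -/
noncomputable def CVaRd (n : ℕ) [NeZero n] (ψ : Fin n → ℝ) (α : ℝ) : ℝ :=
  (1 / α) * ∫ s in (0:ℝ)..α, VaRd n ψ s

lemma piece {n : ℕ} [NeZero n] (ψ : Fin n → ℝ) (k : ℕ) (hk : k < n) (a b : ℝ)
    (ha : (k : ℝ) / n ≤ a) (hab : a ≤ b) (hb : b ≤ ((k : ℝ) + 1) / n) :
    IntervalIntegrable (VaRd n ψ) volume a b ∧
    ∫ s in a..b, VaRd n ψ s = (b - a) * (-ψ ⟨k, hk⟩) := by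
  have hn : (0 : ℝ) < n := by exact_mod_cast Nat.pos_of_ne_zero (NeZero.ne n)
  have hae : VaRd n ψ =ᵐ[volume.restrict (Set.uIoc a b)] fun _ => -ψ ⟨k, hk⟩ := by
    have hne : ∀ᵐ s : ℝ ∂volume, s ≠ b := by
      rw [ae_iff]
      have : {s : ℝ | ¬ s ≠ b} = {b} := by ext s; simp
      rw [this]; exact measure_singleton b
    filter_upwards [ae_restrict_mem measurableSet_uIoc, ae_restrict_of_ae hne]
      with s hs hsb
    rw [Set.uIoc_of_le hab] at hs
    have hs1 : (k : ℝ) / n ≤ s := ha.trans hs.1.le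
    have hs2 : s < ((k : ℝ) + 1) / n := lt_of_le_of_ne hs.2 hsb |>.trans_le hb
    have hfl : ⌊s * (n : ℝ)⌋₊ = k := by
      rw [Nat.floor_eq_iff (mul_nonneg ((by positivity : (0:ℝ) ≤ (k:ℝ)/n).trans hs1) hn.le)]
      constructor
      · calc (k : ℝ) = (k : ℝ) / n * n := by field_simp
          _ ≤ s * n := by nlinarith
      · calc s * n < (((k : ℝ) + 1) / n) * n := by nlinarith
          _ = (k : ℝ) + 1 := by field_simp
    unfold VaRd
    congr 2
    exact Fin.ext (by simp [hfl, Nat.min_eq_left (by omega : k ≤ n - 1)])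
  have hint : IntervalIntegrable (VaRd n ψ) volume a b := by
    rw [intervalIntegrable_iff]
    exact (integrableOn_const measure_Ioc_lt_top.ne).congr hae.symm
  refine ⟨hint, ?_⟩
  have h' : ∀ᵐ x ∂volume, x ∈ Set.uIoc a b → VaRd n ψ x = -ψ ⟨k, hk⟩ :=
    (ae_restrict_iff' measurableSet_uIoc).1 hae
  rw [intervalIntegral.integral_congr_ae h', intervalIntegral.integral_const]
  simp [smul_eq_mul]

lemma cum {n : ℕ} [NeZero n] (ψ : Fin n → ℝ) :
    ∀ j : ℕ, j ≤ n →
    IntervalIntegrable (VaRd n ψ) volume 0 ((j : ℝ) / n) ∧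
    ∫ s in (0:ℝ)..((j : ℝ) / n), VaRd n ψ s =
      -(∑ k ∈ Finset.univ.filter (fun k : Fin n => (k : ℕ) < j), (1 / (n : ℝ)) * ψ k) := by
  have hn : (0 : ℝ) < n := by exact_mod_cast Nat.pos_of_ne_zero (NeZero.ne n)
  intro j
  induction j with
  | zero =>
    intro _
    constructor
    · simp [intervalIntegrable_iff]
    · simp
  | succ j ih =>
    intro hj
    obtain ⟨ih1, ih2⟩ := ih (by omega)
    have hjn : j < n := by omega
    have hle : (j : ℝ) / n ≤ ((j : ℝ) + 1) / n := by
      exact (div_le_div_iff_of_pos_right hn).mpr (by linarith)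
    have hpc := piece ψ j hjn ((j : ℝ) / n) (((j : ℝ) + 1) / n) le_rfl hle le_rfl
    have h0 : (0 : ℝ) ≤ (j : ℝ) / n := by positivity
    constructor
    · push_cast
      exact ih1.trans hpc.1
    · push_cast
      rw [← intervalIntegral.integral_add_adjacent_intervals ih1 hpc.1, ih2, hpc.2]
      have hins : Finset.univ.filter (fun k : Fin n => (k : ℕ) < j + 1)
          = insert (⟨j, hjn⟩ : Fin n) (Finset.univ.filter (fun k : Fin n => (k : ℕ) < j)) := by
        ext k
        simp only [Finset.mem_insert, Finset.mem_filter, Finset.mem_univ, true_and]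
        constructor
        · intro h
          rcases Nat.lt_or_ge (k : ℕ) j with h' | h'
          · exact Or.inr h'
          · exact Or.inl (Fin.ext (show (k : ℕ) = j by omega))
        · rintro (rfl | h)
          · exact Nat.lt_succ_self j
          · omega
      rw [hins, Finset.sum_insert (by simp)]
      have : ((j : ℝ) + 1) / n - (j : ℝ) / n = 1 / n := by field_simp; ring
      rw [this]
      ring

/-- for an equiprobable discrete distribution with sorted
outcomes `ψ 0 ≤ … ≤ ψ (n-1)` (so `ψ (k-1)` is `ψ^{i_k}`), each of probability
`p = 1/n`: `CVaR_α(ψ) = -(1/α)(Σ_{k=1}^j p ψ^{i_k} + (α - jp) ψ^{i_{j+1}})`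
for `α ∈ [jp,(j+1)p)` with `1 ≤ j ≤ n-1`; `CVaR_α(ψ) = -ψ^{i_1}` for
`α ∈ (0,p)`; and `CVaR_1(ψ) = -Σ_k p ψ^{i_k}`. -/
theorem cvar_equiprobable_formula {n : ℕ} [NeZero n]
    (ψ : Fin n → ℝ) (hψ : Monotone ψ) (p : ℝ) (hp : p = 1 / n) :
    (∀ j : ℕ, 1 ≤ j → (hj : j ≤ n - 1) → ∀ α : ℝ,
      (j : ℝ) * p ≤ α → α < ((j : ℝ) + 1) * p →
      CVaRd n ψ α =
        -(1 / α) * ((∑ k ∈ Finset.univ.filter (fun k : Fin n => (k : ℕ) < j),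
            p * ψ k)
          + (α - (j : ℝ) * p) *
              ψ ⟨j, lt_of_le_of_lt hj
                    (Nat.sub_lt (Nat.pos_of_ne_zero (NeZero.ne n)) one_pos)⟩)) ∧
    (∀ α : ℝ, 0 < α → α < p → CVaRd n ψ α = -ψ 0) ∧
    CVaRd n ψ 1 = -(∑ k, p * ψ k) := by
  have hn : (0 : ℝ) < n := by exact_mod_cast Nat.pos_of_ne_zero (NeZero.ne n)
  have hn1 : 1 ≤ n := Nat.pos_of_ne_zero (NeZero.ne n)
  subst hp
  refine ⟨?_, ?_, ?_⟩
  · intro j h1 hj α hα1 hα2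
    have hjn : j < n := by omega
    have hmul : ∀ x : ℝ, x * (1 / n) = x / n := fun x => by ring
    rw [hmul] at hα1
    rw [hmul] at hα2
    have hc := cum ψ j (by omega)
    have hpc := piece ψ j hjn ((j : ℝ) / n) α le_rfl hα1 hα2.le
    unfold CVaRd
    rw [← intervalIntegral.integral_add_adjacent_intervals hc.1 hpc.1, hc.2, hpc.2]
    rw [hmul]
    ring
  · intro α hα1 hα2
    have hpc := piece ψ 0 (Nat.pos_of_ne_zero (NeZero.ne n)) 0 α
      (by simp) hα1.le (by rw [show ((0:ℕ):ℝ) + 1 = 1 by norm_num]; linarith)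
    unfold CVaRd
    rw [hpc.2]
    have h0 : ψ ⟨0, Nat.pos_of_ne_zero (NeZero.ne n)⟩ = ψ 0 := by
      congr 1
    rw [h0]
    field_simp
    ring
  · have hc := cum ψ n le_rfl
    have h1 : ((n : ℝ)) / n = 1 := by field_simp
    rw [h1] at hc
    unfold CVaRd
    rw [hc.2]
    have : Finset.univ.filter (fun k : Fin n => (k : ℕ) < n) = Finset.univ := by
      ext k; simp [k.isLt]
    rw [this]
    ring
end

section
/- Rockafellar–Uryasev representation: for α ∈ (0,1) and a random variable ψ on a finite equiprobable probability space, CVaR_α(ψ) = -max_{c ∈ ℝ} ( c - (1/α) E[(c - ψ)_+] ), where (t)_+ = max{t, 0}, and the maximum is attained for any c in the interval [VaR_{1-α}(-ψ), -VaR_α(ψ)]. -/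
open Finset

/-- The value-at-risk of an arbitrary random variable on a finite equiprobable
probability space, obtained by sorting its outcomes. -/
noncomputable def VaR (n : ℕ) [NeZero n] (ψ : Fin n → ℝ) (α : ℝ) : ℝ :=
  VaRd n (ψ ∘ Tuple.sort ψ) α

/-- Rockafellar–Uryasev representation: for `α ∈ (0,1)` and a
random variable `ψ` with sorted equiprobable outcomes (`p = 1/n`),
`CVaR_α(ψ) = -max_{c ∈ ℝ} (c - (1/α) E[(c-ψ)₊])`, and the maximum is attained
for any `c` in the interval `[VaR_{1-α}(-ψ), -VaR_α(ψ)]`. -/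
theorem cvar_rockafellarUryasev {n : ℕ} [NeZero n]
    (ψ : Fin n → ℝ) (hψ : Monotone ψ) (p : ℝ) (hp : p = 1 / n)
    (α : ℝ) (hα0 : 0 < α) (hα1 : α < 1) :
    CVaRd n ψ α
        = -sSup (Set.range fun c : ℝ =>
            c - (1 / α) * ∑ i, p * max (c - ψ i) 0) ∧
    ∀ c ∈ Set.Icc (VaR n (fun i => -ψ i) (1 - α)) (-(VaRd n ψ α)),
      c - (1 / α) * ∑ i, p * max (c - ψ i) 0
        = sSup (Set.range fun c : ℝ =>
            c - (1 / α) * ∑ i, p * max (c - ψ i) 0) := by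
  have hn0 : 0 < n := Nat.pos_of_ne_zero (NeZero.ne n)
  have hnR : (0:ℝ) < n := by exact_mod_cast hn0
  set j := ⌊α * (n : ℝ)⌋₊ with hjdef
  have hjle : (j : ℝ) ≤ α * n := Nat.floor_le (by positivity)
  have hjlt1 : α * n < (j : ℝ) + 1 := Nat.lt_floor_add_one _
  have hjn : j < n := by
    rw [hjdef, Nat.floor_lt (by positivity)]
    nlinarith
  have hjn1 : j ≤ n - 1 := by omega
  -- the auxiliary sequence of sorted values, indexed by ℕ
  set Ψ : ℕ → ℝ := fun t => ψ ⟨min t (n - 1),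
      lt_of_le_of_lt (min_le_right _ _)
        (Nat.sub_lt (Nat.pos_of_ne_zero (NeZero.ne n)) one_pos)⟩ with hΨdef
  have hΨmono : Monotone Ψ := by
    intro s t hst
    exact hψ (by simp [Fin.le_def, min_le_min hst le_rfl])
  have hΨeq : ∀ i : Fin n, ψ i = Ψ i.1 := by
    intro i
    congr 1
    exact Fin.ext (Nat.min_eq_left (by have := i.isLt; omega : (i:ℕ) ≤ n - 1)).symm
  have hVaRdΨ : ∀ s : ℝ, VaRd n ψ s = -Ψ ⌊s * (n : ℝ)⌋₊ := fun s => rfl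
  have hVaRd : -(VaRd n ψ α) = Ψ j := by
    rw [hVaRdΨ, neg_neg]
  -- the k and m indices
  set k := ⌊(1 - α) * (n : ℝ)⌋₊ with hkdef
  have hkle : (k : ℝ) ≤ (1 - α) * n := Nat.floor_le (by nlinarith)
  have hkn : k < n := by
    rw [hkdef, Nat.floor_lt (by nlinarith)]
    nlinarith
  set m := n - 1 - k with hmdef
  have hmn : m < n := by omega
  have hmα : α * n ≤ (m : ℝ) + 1 := by
    have h1 : ((m : ℕ) : ℝ) + 1 = ((n : ℕ) : ℝ) - k := by
      have : m + 1 = n - k := by omega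
      rw [show ((m:ℕ):ℝ) + 1 = (((m+1 : ℕ)):ℝ) by push_cast; ring, this,
        Nat.cast_sub (le_of_lt hkn)]
    rw [h1]; linarith
  -- the sum S
  set S : ℝ → ℝ := fun c => ∑ t ∈ Finset.range n, max (c - Ψ t) 0 with hSdef
  have hαn : (0:ℝ) < α * n := by positivity
  -- rewriting the objective function
  have hF : ∀ c : ℝ, (c - (1 / α) * ∑ i : Fin n, p * max (c - ψ i) 0)
      = c - 1 / (α * n) * S c := by
    intro c
    have h1 : ∑ i : Fin n, p * max (c - ψ i) 0 = p * S c := by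
      rw [← Finset.mul_sum]
      congr 1
      simp only [hSdef]
      rw [← Fin.sum_univ_eq_sum_range (fun t => max (c - Ψ t) 0) n]
      exact Finset.sum_congr rfl (fun i _ => by rw [hΨeq i])
    rw [h1, hp]; ring
  -- filters
  have hfilt_lt : ∀ t : ℕ, t ≤ n → Finset.filter (fun i => i < t) (Finset.range n)
      = Finset.range t := by
    intro t ht
    ext x
    simp only [Finset.mem_filter, Finset.mem_range]
    omega
  -- upper bound: S (Ψ j) - S c ≤ α n (Ψ j - c) for c ≤ Ψ j
  have hub : ∀ c : ℝ, c ≤ Ψ j → S (Ψ j) - S c ≤ α * n * (Ψ j - c) := by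
    intro c hc
    have h1 : S (Ψ j) - S c = ∑ t ∈ Finset.range n,
        (max (Ψ j - Ψ t) 0 - max (c - Ψ t) 0) := by
      rw [hSdef, Finset.sum_sub_distrib]
    have h2 : ∑ t ∈ Finset.range n, (max (Ψ j - Ψ t) 0 - max (c - Ψ t) 0)
        ≤ ∑ t ∈ Finset.range n, (if t < j then Ψ j - c else 0) := by
      apply Finset.sum_le_sum
      intro t _
      by_cases ht : t < j
      · simp only [ht, if_pos]
        have : Ψ j - Ψ t ≤ (Ψ j - c) + max (c - Ψ t) 0 := by
          have := le_max_left (c - Ψ t) 0; linarith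
        have h0 : (0:ℝ) ≤ (Ψ j - c) + max (c - Ψ t) 0 := by
          have := le_max_right (c - Ψ t) 0; linarith
        have := max_le this h0
        linarith
      · simp only [ht, if_neg, not_false_iff]
        have hΨt : Ψ j ≤ Ψ t := hΨmono (by omega)
        have : max (Ψ j - Ψ t) 0 = 0 := max_eq_right (by linarith)
        have := le_max_right (c - Ψ t) 0
        linarith
    have h3 : ∑ t ∈ Finset.range n, (if t < j then Ψ j - c else 0)
        = (j : ℝ) * (Ψ j - c) := by
      rw [← Finset.sum_filter, hfilt_lt j (by omega), Finset.sum_const,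
        Finset.card_range, nsmul_eq_mul]
    have h4 : (j : ℝ) * (Ψ j - c) ≤ α * n * (Ψ j - c) :=
      mul_le_mul_of_nonneg_right hjle (by linarith)
    linarith
  -- lower bound for c ≥ Ψ j
  have hlb : ∀ c : ℝ, Ψ j ≤ c → α * n * (c - Ψ j) ≤ S c - S (Ψ j) := by
    intro c hc
    have h1 : S c - S (Ψ j) = ∑ t ∈ Finset.range n,
        (max (c - Ψ t) 0 - max (Ψ j - Ψ t) 0) := by
      rw [hSdef, Finset.sum_sub_distrib]
    have h2 : ∑ t ∈ Finset.range n, (if t < j + 1 then c - Ψ j else 0)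
        ≤ ∑ t ∈ Finset.range n, (max (c - Ψ t) 0 - max (Ψ j - Ψ t) 0) := by
      apply Finset.sum_le_sum
      intro t _
      by_cases ht : t < j + 1
      · simp only [ht, if_pos]
        have hΨt : Ψ t ≤ Ψ j := hΨmono (by omega)
        have e1 : max (c - Ψ t) 0 = c - Ψ t := max_eq_left (by linarith)
        have e2 : max (Ψ j - Ψ t) 0 = Ψ j - Ψ t := max_eq_left (by linarith)
        rw [e1, e2]
        linarith
      · simp only [ht, if_neg, not_false_iff]
        have hΨt : Ψ j ≤ Ψ t := hΨmono (by omega)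
        have e2 : max (Ψ j - Ψ t) 0 = 0 := max_eq_right (by linarith)
        have := le_max_right (c - Ψ t) 0
        rw [e2]
        linarith
    have h3 : ∑ t ∈ Finset.range n, (if t < j + 1 then c - Ψ j else 0)
        = ((j : ℝ) + 1) * (c - Ψ j) := by
      rw [← Finset.sum_filter, hfilt_lt (j+1) (by omega), Finset.sum_const,
        Finset.card_range, nsmul_eq_mul]
      push_cast; ring
    have h4 : α * n * (c - Ψ j) ≤ ((j : ℝ) + 1) * (c - Ψ j) :=
      mul_le_mul_of_nonneg_right (le_of_lt hjlt1) (by linarith)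
    linarith
  -- middle equality
  have hmid : ∀ c : ℝ, Ψ m ≤ c → c ≤ Ψ j → S (Ψ j) - S c = α * n * (Ψ j - c) := by
    intro c hcm hcj
    have h1 : S (Ψ j) - S c = ∑ t ∈ Finset.range n,
        (max (Ψ j - Ψ t) 0 - max (c - Ψ t) 0) := by
      rw [hSdef, Finset.sum_sub_distrib]
    have h2 : ∑ t ∈ Finset.range n, (if t < m + 1 then Ψ j - c else 0)
        ≤ ∑ t ∈ Finset.range n, (max (Ψ j - Ψ t) 0 - max (c - Ψ t) 0) := by
      apply Finset.sum_le_sum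
      intro t _
      by_cases ht : t < m + 1
      · simp only [ht, if_pos]
        have hΨt : Ψ t ≤ Ψ m := hΨmono (by omega)
        have e1 : max (c - Ψ t) 0 = c - Ψ t := max_eq_left (by linarith)
        have := le_max_left (Ψ j - Ψ t) 0
        rw [e1]
        linarith
      · simp only [ht, if_neg, not_false_iff]
        have : max (c - Ψ t) 0 ≤ max (Ψ j - Ψ t) 0 :=
          max_le_max (by linarith) le_rfl
        linarith
    have h3 : ∑ t ∈ Finset.range n, (if t < m + 1 then Ψ j - c else 0)
        = ((m : ℝ) + 1) * (Ψ j - c) := by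
      rw [← Finset.sum_filter, hfilt_lt (m+1) (by omega), Finset.sum_const,
        Finset.card_range, nsmul_eq_mul]
      push_cast; ring
    have h4 : α * n * (Ψ j - c) ≤ ((m : ℝ) + 1) * (Ψ j - c) :=
      mul_le_mul_of_nonneg_right hmα (by linarith)
    have h5 := hub c hcj
    linarith
  -- maximality of the objective at Ψ j
  have hFle : ∀ c : ℝ, c - 1 / (α * n) * S c ≤ Ψ j - 1 / (α * n) * S (Ψ j) := by
    intro c
    rcases le_total c (Ψ j) with hc | hc
    · have := hub c hc
      have h1 : 1 / (α * n) * (S (Ψ j) - S c) ≤ Ψ j - c := by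
        rw [div_mul_eq_mul_div, one_mul, div_le_iff₀ hαn]
        calc S (Ψ j) - S c ≤ α * n * (Ψ j - c) := this
          _ = (Ψ j - c) * (α * n) := by ring
      have h2 : 1 / (α * n) * (S (Ψ j) - S c)
          = 1 / (α * n) * S (Ψ j) - 1 / (α * n) * S c := mul_sub _ _ _
      linarith
    · have := hlb c hc
      have h1 : c - Ψ j ≤ 1 / (α * n) * (S c - S (Ψ j)) := by
        rw [div_mul_eq_mul_div, one_mul, le_div_iff₀ hαn]
        calc (c - Ψ j) * (α * n) = α * n * (c - Ψ j) := by ring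
          _ ≤ S c - S (Ψ j) := this
      have h2 : 1 / (α * n) * (S c - S (Ψ j))
          = 1 / (α * n) * S c - 1 / (α * n) * S (Ψ j) := mul_sub _ _ _
      linarith
  -- the supremum equals the value at Ψ j
  have hgreat : IsGreatest (Set.range fun c : ℝ =>
      c - (1 / α) * ∑ i : Fin n, p * max (c - ψ i) 0)
      (Ψ j - 1 / (α * n) * S (Ψ j)) := by
    constructor
    · exact ⟨Ψ j, hF (Ψ j)⟩
    · rintro y ⟨c, rfl⟩
      exact (hF c).trans_le (hFle c)
  have hSup : sSup (Set.range fun c : ℝ =>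
      c - (1 / α) * ∑ i : Fin n, p * max (c - ψ i) 0)
      = Ψ j - 1 / (α * n) * S (Ψ j) := hgreat.csSup_eq
  -- equality on the interval
  have heq : ∀ c : ℝ, Ψ m ≤ c → c ≤ Ψ j →
      c - 1 / (α * n) * S c = Ψ j - 1 / (α * n) * S (Ψ j) := by
    intro c hcm hcj
    have h := hmid c hcm hcj
    have h1 : 1 / (α * n) * (S (Ψ j) - S c) = Ψ j - c := by
      rw [h, one_div, inv_mul_cancel_left₀ (ne_of_gt hαn)]
    have h2 : 1 / (α * n) * (S (Ψ j) - S c)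
        = 1 / (α * n) * S (Ψ j) - 1 / (α * n) * S c := mul_sub _ _ _
    linarith
  -- value of S at Ψ j
  have hSj : S (Ψ j) = (j : ℝ) * Ψ j - ∑ t ∈ Finset.range j, Ψ t := by
    have h1 : S (Ψ j) = ∑ t ∈ Finset.range n, (if t < j then Ψ j - Ψ t else 0) := by
      apply Finset.sum_congr rfl
      intro t _
      by_cases ht : t < j
      · rw [if_pos ht, max_eq_left (by have := hΨmono (le_of_lt ht); linarith)]
      · rw [if_neg ht, max_eq_right (by have := hΨmono (by omega : j ≤ t); linarith)]
    rw [h1, ← Finset.sum_filter, hfilt_lt j (by omega),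
      Finset.sum_sub_distrib, Finset.sum_const, Finset.card_range, nsmul_eq_mul]
  -- the integral
  have hInt : (∫ s in (0:ℝ)..α, VaRd n ψ s)
      = (∑ t ∈ Finset.range j, (1 / (n:ℝ)) * (-Ψ t)) + (α - j / n) * (-Ψ j) := by
    have hanti : Antitone (VaRd n ψ) := by
      intro s t hst
      simp only [VaRd, neg_le_neg_iff]
      apply hψ
      simp only [Fin.le_def]
      exact min_le_min (Nat.floor_le_floor
        (mul_le_mul_of_nonneg_right hst (le_of_lt hnR))) le_rfl
    set a : ℕ → ℝ := fun i => if i ≤ j then (i : ℝ) / n else α with hadef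
    have hint : ∀ t : ℕ, t < j + 1 →
        IntervalIntegrable (VaRd n ψ) MeasureTheory.volume (a t) (a (t+1)) :=
      fun t _ => hanti.intervalIntegrable
    have hsum := intervalIntegral.sum_integral_adjacent_intervals hint
    have ha0 : a 0 = 0 := by simp [hadef]
    have haj : a (j + 1) = α := by simp [hadef]
    rw [ha0, haj] at hsum
    rw [← hsum, Finset.sum_range_succ]
    congr 1
    · apply Finset.sum_congr rfl
      intro t ht
      rw [Finset.mem_range] at ht
      have hat : a t = (t : ℝ) / n := by simp only [hadef, if_pos (show t ≤ j by omega)]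
      have hat1 : a (t + 1) = ((t : ℝ) + 1) / n := by
        simp only [hadef, if_pos (by omega : t + 1 ≤ j)]; push_cast; ring
      rw [hat, hat1]
      have hae : ∀ᵐ s : ℝ ∂MeasureTheory.volume, s ≠ ((t : ℝ) + 1) / (n:ℝ) := by
        refine MeasureTheory.ae_iff.mpr ?_
        have hset : {x : ℝ | ¬ x ≠ ((t : ℝ) + 1) / (n:ℝ)} = {((t : ℝ) + 1) / (n:ℝ)} := by
          ext x; simp
        rw [hset]
        exact Real.volume_singleton
      have hcong : ∀ᵐ s : ℝ, s ∈ Set.uIoc ((t:ℝ)/n) (((t:ℝ)+1)/n) →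
          VaRd n ψ s = -Ψ t := by
        filter_upwards [hae] with s hs hmem
        have hle : (t : ℝ)/n ≤ ((t:ℝ)+1)/n := by
          exact (div_le_div_iff_of_pos_right hnR).mpr (by linarith)
        rw [Set.uIoc_of_le hle] at hmem
        obtain ⟨h1, h2⟩ := hmem
        have h2' : s < ((t:ℝ)+1)/n := lt_of_le_of_ne h2 hs
        have ht0 : (0:ℝ) ≤ (t:ℝ)/n := by positivity
        have hs0 : (0:ℝ) ≤ s := le_trans ht0 (le_of_lt h1)
        have hfl : ⌊s * (n:ℝ)⌋₊ = t := by
          rw [Nat.floor_eq_iff (by positivity)]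
          constructor
          · have h3 := mul_le_mul_of_nonneg_right (le_of_lt h1) (le_of_lt hnR)
            rwa [div_mul_cancel₀ _ (ne_of_gt hnR)] at h3
          · have h3 := mul_lt_mul_of_pos_right h2' hnR
            rwa [div_mul_cancel₀ _ (ne_of_gt hnR)] at h3
        rw [hVaRdΨ, hfl]
      rw [intervalIntegral.integral_congr_ae hcong, intervalIntegral.integral_const]
      rw [smul_eq_mul]
      congr 1
      field_simp
      ring
    · have haj' : a j = (j : ℝ) / n := by simp [hadef]
      rw [haj', haj]
      have hjα : (j : ℝ) / n ≤ α := by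
        rw [div_le_iff₀ hnR]; linarith
      have hcong : Set.EqOn (VaRd n ψ) (fun _ => -Ψ j) (Set.uIcc ((j:ℝ)/n) α) := by
        intro s hs
        rw [Set.uIcc_of_le hjα] at hs
        obtain ⟨h1, h2⟩ := hs
        have hj0 : (0:ℝ) ≤ (j:ℝ)/n := by positivity
        have hs0 : (0:ℝ) ≤ s := le_trans hj0 h1
        have hfl : ⌊s * (n:ℝ)⌋₊ = j := by
          rw [Nat.floor_eq_iff (by positivity)]
          constructor
          · have h3 := mul_le_mul_of_nonneg_right h1 (le_of_lt hnR)
            rwa [div_mul_cancel₀ _ (ne_of_gt hnR)] at h3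
          · have h3 := mul_le_mul_of_nonneg_right h2 (le_of_lt hnR)
            exact lt_of_le_of_lt h3 hjlt1
        rw [hVaRdΨ, hfl]
      rw [intervalIntegral.integral_congr hcong, intervalIntegral.integral_const,
        smul_eq_mul]
  -- first conjunct
  have hmain : CVaRd n ψ α = -(Ψ j - 1 / (α * n) * S (Ψ j)) := by
    rw [CVaRd, hInt, hSj]
    have hA : ∑ t ∈ Finset.range j, (1 / (n:ℝ)) * (-Ψ t)
        = -(1/(n:ℝ)) * ∑ t ∈ Finset.range j, Ψ t := by
      rw [← Finset.mul_sum, Finset.sum_neg_distrib]; ring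
    rw [hA]
    field_simp
    ring
  refine ⟨by rw [hSup, hmain], ?_⟩
  -- second conjunct
  intro c hc
  obtain ⟨hc1, hc2⟩ := hc
  rw [hVaRd] at hc2
  -- lower bound on VaR
  have hVaRlb : Ψ m ≤ VaR n (fun i => -ψ i) (1 - α) := by
    set φ : Fin n → ℝ := fun i => -ψ i with hφdef
    set σ := Tuple.sort φ with hσdef
    have hkmin : min ⌊(1 - α) * (n:ℝ)⌋₊ (n - 1) = k := by
      rw [← hkdef]; omega
    have hVaRval : VaR n φ (1 - α) = ψ (σ ⟨k, hkn⟩) := by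
      rw [VaR, VaRd]
      have he : (⟨⌊(1 - α) * (n:ℝ)⌋₊ ⊓ (n - 1),
          lt_of_le_of_lt (min_le_right _ _)
            (Nat.sub_lt (Nat.pos_of_ne_zero (NeZero.ne n)) one_pos)⟩ : Fin n)
          = ⟨k, hkn⟩ := Fin.ext hkmin
      rw [he]
      simp only [← hσdef, hφdef, Function.comp_apply, neg_neg]
      rfl
    rw [hVaRval]
    -- pigeonhole
    have pig : ∃ i : Fin n, (⟨k, hkn⟩ : Fin n) ≤ i ∧ (⟨m, hmn⟩ : Fin n) ≤ σ i := by
      by_contra h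
      push_neg at h
      have himg : (Finset.Ici (⟨k, hkn⟩ : Fin n)).image σ
          ⊆ Finset.Iio (⟨m, hmn⟩ : Fin n) := by
        intro t ht
        rw [Finset.mem_image] at ht
        obtain ⟨i, hi, rfl⟩ := ht
        rw [Finset.mem_Iio]
        exact h i (Finset.mem_Ici.mp hi)
      have hcard := Finset.card_le_card himg
      rw [Finset.card_image_of_injective _ (Equiv.injective σ),
        Fin.card_Ici, Fin.card_Iio] at hcard
      simp only at hcard
      omega
    obtain ⟨i, hki, hmi⟩ := pig
    have hmono := Tuple.monotone_sort φ hki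
    simp only [Function.comp, ← hσdef, hφdef] at hmono
    -- hmono : -ψ (σ ⟨k, hkn⟩) ≤ -ψ (σ i)
    have h1 : ψ ⟨m, hmn⟩ ≤ ψ (σ i) := hψ hmi
    have h2 : Ψ m = ψ ⟨m, hmn⟩ := by
      simp only [hΨdef]
      congr 1
      apply Fin.ext
      exact Nat.min_eq_left (by omega : m ≤ n - 1)
    linarith [h1, h2.le, hmono]
  have hΨm_le_c : Ψ m ≤ c := le_trans hVaRlb hc1
  rw [hF c, hSup]
  exact heq c hΨm_le_c hc2
end
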